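/- Let S = k[a,b] and I = ⟨ax − 1, by − 1⟩ ⊆ S[x,y]. Then S[x,y]/I is flat over S, but the quotient S[x,y,z]/Ĩ by the homogenization Ĩ = ⟨ax − z, by − z⟩ is not flat over S. -/

import Mathlib

open MvPolynomial

set_option maxHeartbeats 1000000
set_option synthInstance.maxHeartbeats 400000

noncomputable section Aux10

abbrev Sr' (k : Type*) [Field k] := MvPolynomial (Fin 2) k

variable (k : Type*) [Field k]

abbrev aux10_ab : Sr' k := X 0 * X 1

abbrev aux10_I1 : Ideal (MvPolynomial (Fin 2) (Sr' k)) :=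
  Ideal.span {C (X 0 : Sr' k) * X 0 - 1, C (X 1 : Sr' k) * X 1 - 1}

abbrev aux10_T1 := MvPolynomial (Fin 2) (Sr' k) ⧸ aux10_I1 k

abbrev aux10_L := Localization.Away (aux10_ab k)

def aux10_v : Fin 2 → aux10_L k :=
  ![algebraMap (Sr' k) (aux10_L k) (X 1) * IsLocalization.Away.invSelf (aux10_ab k),
    algebraMap (Sr' k) (aux10_L k) (X 0) * IsLocalization.Away.invSelf (aux10_ab k)]

/-- the map T1 → L -/
def aux10_f : aux10_T1 k →ₐ[Sr' k] aux10_L k :=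
  Ideal.Quotient.liftₐ (aux10_I1 k) (aeval (aux10_v k))
    (by
      intro a ha
      have : aux10_I1 k ≤ RingHom.ker (aeval (R := Sr' k) (aux10_v k)) := by
        rw [Ideal.span_le]
        rintro r hr
        simp only [Set.mem_insert_iff, Set.mem_singleton_iff] at hr
        rcases hr with rfl | rfl <;>
        · simp only [SetLike.mem_coe, RingHom.mem_ker, map_sub, map_mul, map_one, aeval_C, aeval_X,
            aux10_v, Matrix.cons_val_zero, Matrix.cons_val_one, Matrix.head_cons]
          rw [← mul_assoc, ← map_mul]
          first
          | rw [show (X 0 * X 1 : Sr' k) = aux10_ab k from rfl, IsLocalization.Away.mul_invSelf,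
              sub_self]
          | rw [show (X 1 * X 0 : Sr' k) = aux10_ab k from mul_comm _ _,
              IsLocalization.Away.mul_invSelf, sub_self]
      exact this ha)

lemma aux10_h1 : (Ideal.Quotient.mk (aux10_I1 k)) (C (X 0 : Sr' k) * X 0) = 1 := by
  rw [← map_one (Ideal.Quotient.mk (aux10_I1 k)), Ideal.Quotient.eq]
  exact Ideal.subset_span (Set.mem_insert _ _)

lemma aux10_h2 : (Ideal.Quotient.mk (aux10_I1 k)) (C (X 1 : Sr' k) * X 1) = 1 := by
  rw [← map_one (Ideal.Quotient.mk (aux10_I1 k)), Ideal.Quotient.eq]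
  exact Ideal.subset_span (Set.mem_insert_iff.mpr (Or.inr rfl))

lemma aux10_abxy : algebraMap (Sr' k) (aux10_T1 k) (aux10_ab k)
    * Ideal.Quotient.mk (aux10_I1 k) (X 0 * X 1) = 1 := by
  have : algebraMap (Sr' k) (aux10_T1 k) (aux10_ab k)
      = Ideal.Quotient.mk _ (C (aux10_ab k)) := rfl
  rw [this, ← map_mul]
  have : (C (aux10_ab k) * (X 0 * X 1) : MvPolynomial (Fin 2) (Sr' k))
      = (C (X 0 : Sr' k) * X 0) * (C (X 1 : Sr' k) * X 1) := by
    rw [map_mul]; ring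
  rw [this, map_mul, aux10_h1, aux10_h2]
  exact one_mul (1 : aux10_T1 k)

lemma aux10_unit : IsUnit (algebraMap (Sr' k) (aux10_T1 k) (aux10_ab k)) :=
  ⟨⟨algebraMap (Sr' k) (aux10_T1 k) (aux10_ab k), Ideal.Quotient.mk (aux10_I1 k) (X 0 * X 1),
    aux10_abxy k, by
      rw [mul_comm ((Ideal.Quotient.mk (aux10_I1 k)) (X 0 * X 1))]; exact aux10_abxy k⟩, rfl⟩

def aux10_g : aux10_L k →ₐ[Sr' k] aux10_T1 k :=
  IsLocalization.liftAlgHom (A := Sr' k) (R := Sr' k) (S := aux10_L k) (P := aux10_T1 k)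
    (M := Submonoid.powers (aux10_ab k))
    (f := Algebra.ofId (Sr' k) (aux10_T1 k))
    (show ∀ y : Submonoid.powers (aux10_ab k), IsUnit (Algebra.ofId (Sr' k) (aux10_T1 k) y) from by
      rintro ⟨y, n, rfl⟩
      simpa only [Algebra.ofId_apply, map_pow] using (aux10_unit k).pow n)

lemma aux10_fg : (aux10_f k).comp (aux10_g k) = AlgHom.id _ _ := by
  apply AlgHom.coe_ringHom_injective
  apply IsLocalization.ringHom_ext (Submonoid.powers (aux10_ab k))
  ext s <;>
    simp only [RingHom.coe_comp, Function.comp_apply, RingHom.coe_coe] <;>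
    rw [AlgHom.commutes, AlgHom.commutes]

lemma aux10_g_inv : aux10_g k (IsLocalization.Away.invSelf (aux10_ab k))
    = Ideal.Quotient.mk (aux10_I1 k) (X 0 * X 1) := by
  have hmul : algebraMap (Sr' k) (aux10_T1 k) (aux10_ab k)
      * aux10_g k (IsLocalization.Away.invSelf (aux10_ab k)) = 1 := by
    rw [show algebraMap (Sr' k) (aux10_T1 k) (aux10_ab k)
        = aux10_g k (algebraMap (Sr' k) (aux10_L k) (aux10_ab k)) from
      ((aux10_g k).comp_algebraMap ▸ rfl), ← map_mul,
      IsLocalization.Away.mul_invSelf, map_one]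
  have := (aux10_unit k)
  exact this.mul_left_cancel (by rw [hmul, aux10_abxy k])

lemma aux10_gf0 : algebraMap (Sr' k) (aux10_T1 k) (X 1)
    * Ideal.Quotient.mk (aux10_I1 k) (X 0 * X 1) = Ideal.Quotient.mk (aux10_I1 k) (X 0) := by
  have h : algebraMap (Sr' k) (aux10_T1 k) (X 1) = Ideal.Quotient.mk (aux10_I1 k) (C (X 1)) := rfl
  rw [h, ← map_mul,
    show (C (X 1 : Sr' k) * (X 0 * X 1) : MvPolynomial (Fin 2) (Sr' k))
      = (C (X 1) * X 1) * X 0 by ring, map_mul, aux10_h2]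
  exact one_mul ((Ideal.Quotient.mk (aux10_I1 k)) (X 0))

lemma aux10_gf1 : algebraMap (Sr' k) (aux10_T1 k) (X 0)
    * Ideal.Quotient.mk (aux10_I1 k) (X 0 * X 1) = Ideal.Quotient.mk (aux10_I1 k) (X 1) := by
  have h : algebraMap (Sr' k) (aux10_T1 k) (X 0) = Ideal.Quotient.mk (aux10_I1 k) (C (X 0)) := rfl
  rw [h, ← map_mul,
    show (C (X 0 : Sr' k) * (X 0 * X 1) : MvPolynomial (Fin 2) (Sr' k))
      = (C (X 0) * X 0) * X 1 by ring, map_mul, aux10_h1]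
  exact one_mul ((Ideal.Quotient.mk (aux10_I1 k)) (X 1))

lemma aux10_hf (j : Fin 2) :
    aux10_f k (Ideal.Quotient.mkₐ (Sr' k) (aux10_I1 k) (X j)) = aux10_v k j := by
  simp [aux10_f, Ideal.Quotient.liftₐ_apply, Ideal.Quotient.mkₐ_eq_mk, Ideal.Quotient.lift_mk]
  exact aeval_X (aux10_v k) j

lemma aux10_gf : (aux10_g k).comp (aux10_f k) = AlgHom.id _ _ := by
  apply Ideal.Quotient.algHom_ext
  apply MvPolynomial.algHom_ext
  intro i
  fin_cases i
  · rw [AlgHom.comp_apply, AlgHom.comp_apply, AlgHom.comp_apply]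
    rw [show ((⟨0, by norm_num⟩ : Fin 2)) = (0 : Fin 2) from rfl, aux10_hf k 0,
      show aux10_v k 0 = algebraMap (Sr' k) (aux10_L k) (X 1)
        * IsLocalization.Away.invSelf (aux10_ab k) from rfl,
      map_mul, aux10_g_inv, AlgHom.commutes, aux10_gf0]
    simp [Ideal.Quotient.mkₐ_eq_mk]
  · rw [AlgHom.comp_apply, AlgHom.comp_apply, AlgHom.comp_apply]
    rw [show ((⟨1, by norm_num⟩ : Fin 2)) = (1 : Fin 2) from rfl, aux10_hf k 1,
      show aux10_v k 1 = algebraMap (Sr' k) (aux10_L k) (X 0)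
        * IsLocalization.Away.invSelf (aux10_ab k) from rfl,
      map_mul, aux10_g_inv, AlgHom.commutes, aux10_gf1]
    simp [Ideal.Quotient.mkₐ_eq_mk]

noncomputable def aux10_equiv : aux10_L k ≃ₐ[Sr' k] aux10_T1 k :=
  AlgEquiv.ofAlgHom (aux10_g k) (aux10_f k) (aux10_gf k) (aux10_fg k)

theorem aux10_flat : Module.Flat (Sr' k) (aux10_T1 k) :=
  Module.Flat.of_linearEquiv
    (aux10_equiv k).symm.toLinearEquiv

end Aux10

noncomputable section Aux10b

variable (k : Type*) [Field k]

abbrev aux10_J : Ideal (MvPolynomial (Fin 3) (Sr' k)) :=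
  Ideal.span {C (X 0 : Sr' k) * X 0 - X 2, C (X 1 : Sr' k) * X 1 - X 2}

abbrev aux10_T := MvPolynomial (Fin 3) (Sr' k) ⧸ aux10_J k

def aux10_mu0 : MvPolynomial (Fin 3) (Sr' k) →+* Sr' k :=
  eval₂Hom ((C : k →+* Sr' k).comp (constantCoeff : Sr' k →+* k)) ![X 0, X 1, 0]

lemma aux10_mu0_ker : ∀ a ∈ aux10_J k, aux10_mu0 k a = 0 := by
  intro a ha
  have h : aux10_J k ≤ RingHom.ker (aux10_mu0 k) := by
    rw [Ideal.span_le]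
    rintro r hr
    simp only [Set.mem_insert_iff, Set.mem_singleton_iff] at hr
    rcases hr with rfl | rfl <;>
      simp [aux10_mu0, constantCoeff_X, RingHom.mem_ker]
  exact h ha

def aux10_mu1 : aux10_T k →+* Sr' k :=
  Ideal.Quotient.lift (aux10_J k) (aux10_mu0 k) (aux10_mu0_ker k)

/-- key coefficient lemma -/
lemma aux10_Dmul (s p : Sr' k) (hp : constantCoeff p = 0) :
    coeff (Finsupp.single 0 1) (s * p)
      = constantCoeff s * coeff (Finsupp.single 0 1) p := by
  rw [coeff_mul]
  rw [Finset.sum_eq_single ((0 : Fin 2 →₀ ℕ), (Finsupp.single (0 : Fin 2) 1))]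
  · simp [constantCoeff_eq]
  · rintro ⟨d, e⟩ hmem hne
    rw [Finset.HasAntidiagonal.mem_antidiagonal] at hmem
    have h1 : d 1 + e 1 = 0 := by
      have := congrArg (fun f => f (1 : Fin 2)) hmem
      simpa [Finsupp.single_apply] using this
    have h0 : d 0 + e 0 = 1 := by
      have := congrArg (fun f => f (0 : Fin 2)) hmem
      simpa [Finsupp.single_apply] using this
    rcases Nat.eq_zero_of_add_eq_zero_right h1 with hd1
    have he1 : e 1 = 0 := Nat.eq_zero_of_add_eq_zero_left h1
    by_cases he0 : e 0 = 0
    · have he : e = 0 := by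
        ext j; fin_cases j
        · exact he0
        · exact he1
      have : coeff e p = 0 := by
        rw [he]
        simpa [constantCoeff_eq] using hp
      simp [this]
    · have he0' : e 0 = 1 := by omega
      have hd0 : d 0 = 0 := by omega
      have hd : d = 0 := by
        ext j; fin_cases j
        · exact hd0
        · exact hd1
      have he : e = Finsupp.single 0 1 := by
        ext j; fin_cases j
        · simpa [Finsupp.single_apply] using he0'
        · simpa [Finsupp.single_apply] using he1
      exact absurd (by rw [hd, he]) hne
  · intro h
    exact absurd (Finset.HasAntidiagonal.mem_antidiagonal.mpr (zero_add _)) h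

lemma aux10_smul_mk (s : Sr' k) (r : MvPolynomial (Fin 3) (Sr' k)) :
    s • (Ideal.Quotient.mk (aux10_J k) r) = Ideal.Quotient.mk (aux10_J k) (C s * r) := by
  rw [← smul_eq_C_mul]
  rfl

lemma aux10_mu1_mk (r : MvPolynomial (Fin 3) (Sr' k)) :
    aux10_mu1 k (Ideal.Quotient.mk (aux10_J k) r) = aux10_mu0 k r :=
  Ideal.Quotient.lift_mk _ _ _

lemma aux10_mu1_smul (s : Sr' k) (t : aux10_T k) :
    aux10_mu1 k (s • t) = C (constantCoeff s) * aux10_mu1 k t := by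
  obtain ⟨r, rfl⟩ := Ideal.Quotient.mk_surjective t
  rw [aux10_smul_mk, aux10_mu1_mk, aux10_mu1_mk, map_mul]
  congr 1
  simp [aux10_mu0]

def aux10_K (k : Type*) : Type _ := k

def aux10_K.mk : k → aux10_K k := id

instance : AddCommGroup (aux10_K k) := inferInstanceAs (AddCommGroup k)

instance : Module (Sr' k) (aux10_K k) :=
  Module.compHom k (constantCoeff : Sr' k →+* k)

lemma aux10_K_add (a b : k) :
    aux10_K.mk k a + aux10_K.mk k b = aux10_K.mk k (a + b) := rfl

lemma aux10_K_smul (s : Sr' k) (c : k) :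
    s • (aux10_K.mk k c) = aux10_K.mk k (constantCoeff s * c) := rfl

def aux10_D : Sr' k → k := coeff (Finsupp.single 0 1)

def aux10_Ia : Ideal (Sr' k) := Ideal.span {X 0, X 1}

lemma aux10_Ia_cc : ∀ i ∈ aux10_Ia k, constantCoeff i = 0 := by
  intro i hi
  have h : aux10_Ia k ≤ RingHom.ker (constantCoeff : Sr' k →+* k) := by
    rw [aux10_Ia, Ideal.span_le]
    rintro r hr
    simp only [Set.mem_insert_iff, Set.mem_singleton_iff] at hr
    rcases hr with rfl | rfl <;> simp [RingHom.mem_ker, constantCoeff_X]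
  exact h hi

def aux10_B : aux10_Ia k →ₗ[Sr' k] aux10_T k →ₗ[Sr' k] aux10_K k where
  toFun i :=
    { toFun := fun t => aux10_K.mk k (aux10_D k (i : Sr' k) * aux10_D k (aux10_mu1 k t))
      map_add' := fun t1 t2 => by
        show aux10_K.mk k (aux10_D k (i : Sr' k) * aux10_D k (aux10_mu1 k (t1 + t2)))
            = aux10_K.mk k (aux10_D k (i : Sr' k) * aux10_D k (aux10_mu1 k t1))
              + aux10_K.mk k (aux10_D k (i : Sr' k) * aux10_D k (aux10_mu1 k t2))
        rw [aux10_K_add]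
        unfold aux10_D
        rw [map_add, coeff_add]
        congr 1
        ring
      map_smul' := fun s t => by
        show aux10_K.mk k (aux10_D k (i : Sr' k) * aux10_D k (aux10_mu1 k (s • t)))
            = s • aux10_K.mk k (aux10_D k (i : Sr' k) * aux10_D k (aux10_mu1 k t))
        rw [aux10_K_smul, aux10_mu1_smul]
        unfold aux10_D
        rw [coeff_C_mul]
        congr 1
        ring }
  map_add' := fun i j => by
    refine LinearMap.ext fun t => ?_
    show aux10_K.mk k (aux10_D k ((i + j : aux10_Ia k) : Sr' k) * aux10_D k (aux10_mu1 k t))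
        = aux10_K.mk k (aux10_D k (i : Sr' k) * aux10_D k (aux10_mu1 k t))
          + aux10_K.mk k (aux10_D k (j : Sr' k) * aux10_D k (aux10_mu1 k t))
    rw [aux10_K_add, Submodule.coe_add]
    unfold aux10_D
    rw [coeff_add]
    congr 1
    ring
  map_smul' := fun s i => by
    refine LinearMap.ext fun t => ?_
    show aux10_K.mk k (aux10_D k ((s • i : aux10_Ia k) : Sr' k) * aux10_D k (aux10_mu1 k t))
        = s • aux10_K.mk k (aux10_D k (i : Sr' k) * aux10_D k (aux10_mu1 k t))
    rw [aux10_K_smul, SetLike.val_smul, smul_eq_mul]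
    unfold aux10_D
    rw [aux10_Dmul k s (i : Sr' k) (aux10_Ia_cc k _ i.2)]
    congr 1
    ring

theorem aux10_notflat : ¬ Module.Flat (Sr' k) (aux10_T k) := by
  intro hF
  have hFG : (aux10_Ia k).FG :=
    Submodule.fg_span ((Set.finite_singleton ((X 1 : Sr' k))).insert (X 0))
  have hinj := Module.Flat.iff_lift_lsmul_comp_subtype_injective.mp hF hFG
  have hmx : (X 0 : Sr' k) ∈ aux10_Ia k :=
    Ideal.subset_span (Set.mem_insert _ _)
  have hmy : (X 1 : Sr' k) ∈ aux10_Ia k :=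
    Ideal.subset_span (Set.mem_insert_iff.mpr (Or.inr rfl))
  set mx : aux10_Ia k := ⟨X 0, hmx⟩ with hmxd
  set my : aux10_Ia k := ⟨X 1, hmy⟩ with hmyd
  set tx := Ideal.Quotient.mk (aux10_J k) (X 0) with htx
  set ty := Ideal.Quotient.mk (aux10_J k) (X 1) with hty
  set u := mx ⊗ₜ[Sr' k] tx - my ⊗ₜ[Sr' k] ty with hu
  have hu0 : TensorProduct.lift
      ((LinearMap.lsmul (Sr' k) (aux10_T k)).comp (aux10_Ia k).subtype) u = 0 := by
    rw [hu, map_sub, TensorProduct.lift.tmul, TensorProduct.lift.tmul]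
    show (X 0 : Sr' k) • tx - (X 1 : Sr' k) • ty = 0
    rw [htx, hty, aux10_smul_mk, aux10_smul_mk, ← map_sub]
    rw [Ideal.Quotient.eq_zero_iff_mem]
    have h1 : (C (X 0 : Sr' k) * X 0 - X 2 : MvPolynomial (Fin 3) (Sr' k)) ∈ aux10_J k :=
      Ideal.subset_span (Set.mem_insert _ _)
    have h2 : (C (X 1 : Sr' k) * X 1 - X 2 : MvPolynomial (Fin 3) (Sr' k)) ∈ aux10_J k :=
      Ideal.subset_span (Set.mem_insert_iff.mpr (Or.inr rfl))
    have h3 := Ideal.sub_mem _ h1 h2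
    simpa using h3
  have hzero : u = 0 := hinj (by rw [hu0, map_zero])
  have hB := congrArg (TensorProduct.lift (aux10_B k)) hzero
  rw [hu, map_zero, map_sub, TensorProduct.lift.tmul, TensorProduct.lift.tmul] at hB
  have hval : aux10_K.mk k (aux10_D k (X 0) * aux10_D k (aux10_mu1 k tx))
      - aux10_K.mk k (aux10_D k (X 1) * aux10_D k (aux10_mu1 k ty)) = 0 := hB
  have hvk : (aux10_D k (X 0) * aux10_D k (aux10_mu1 k tx)
      - aux10_D k (X 1) * aux10_D k (aux10_mu1 k ty) : k) = 0 := hval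
  have h1 : aux10_D k (X 0) = 1 := coeff_X_same 0
  have h2 : aux10_D k (X 1) = 0 := by
    unfold aux10_D
    rw [coeff_X]
    rw [if_neg]
    intro h
    have := congrArg (fun f => f (1 : Fin 2)) h
    simp [Finsupp.single_apply] at this
  have h3 : aux10_mu1 k tx = X 0 := by
    rw [htx, aux10_mu1_mk]
    simp [aux10_mu0]
  rw [h1, h2, h3] at hvk
  unfold aux10_D at hvk
  rw [coeff_X_same 0] at hvk
  norm_num at hvk

end Aux10b


/-- Let `S = k[a,b]` and `I = ⟨ax − 1, by − 1⟩ ⊆ S[x,y]`. Then `S[x,y]/I` is flat over `S`,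
but the quotient `S[x,y,z]/Ĩ` by the homogenization `Ĩ = ⟨ax − z, by − z⟩` is not flat
over `S`.  Here `a = X 0`, `b = X 1` in `S = k[a,b]`, and `x = X 0`, `y = X 1`, `z = X 2`
in the polynomial rings over `S`. -/
theorem stmt10 {k : Type*} [Field k] :
    Module.Flat (MvPolynomial (Fin 2) k)
      (MvPolynomial (Fin 2) (MvPolynomial (Fin 2) k) ⧸
        (Ideal.span {C (X 0 : MvPolynomial (Fin 2) k) * X 0 - 1,
                     C (X 1 : MvPolynomial (Fin 2) k) * X 1 - 1} :
          Ideal (MvPolynomial (Fin 2) (MvPolynomial (Fin 2) k)))) ∧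
    ¬ Module.Flat (MvPolynomial (Fin 2) k)
      (MvPolynomial (Fin 3) (MvPolynomial (Fin 2) k) ⧸
        (Ideal.span {C (X 0 : MvPolynomial (Fin 2) k) * X 0 - X 2,
                     C (X 1 : MvPolynomial (Fin 2) k) * X 1 - X 2} :
          Ideal (MvPolynomial (Fin 3) (MvPolynomial (Fin 2) k)))) := by
  exact ⟨aux10_flat k, aux10_notflat k⟩
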